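/- In the setting of the context (in particular A admits no local improvement of w²(A), A* is a maximum-weight independent set, A'* is disjoint from P, and every u ∈ A'* satisfies N(u,A') ≠ ∅ so that charge' is defined): for all v ∈ A', ∑_{u∈T'_v} charge'(u,v) ≤ ((d+2)/4)·w(v). -/

import Mathlib

open Finset

open scoped Classical

variable {V : Type*}

noncomputable section

/-- Neighborhood of `U` in `W`: vertices of `W` that lie in `U` or are adjacent to some
vertex of `U`. -/
def nbhd (G : SimpleGraph V) (U W : Finset V) : Finset V :=
  W.filter (fun x => x ∈ U ∨ ∃ u ∈ U, G.Adj u x)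

/-- Neighborhood of a single vertex `u` in `W`. -/
def nbhd1 (G : SimpleGraph V) (u : V) (W : Finset V) : Finset V :=
  nbhd G {u} W

/-- Total weight of a finite set of vertices. -/
def wsum (w : V → ℝ) (U : Finset V) : ℝ := ∑ x ∈ U, w x

/-- Total squared weight of a finite set of vertices. -/
def wsq (w : V → ℝ) (U : Finset V) : ℝ := ∑ x ∈ U, (w x) ^ 2

/-- A finite set of vertices is independent. -/
def IsIndep (G : SimpleGraph V) (S : Finset V) : Prop :=
  ∀ a ∈ S, ∀ b ∈ S, a ≠ b → ¬ G.Adj a b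

/-- `G` is `d`-claw free: every independent subset of the neighborhood of any vertex has
size at most `d - 1`. -/
def ClawFree (G : SimpleGraph V) (d : ℕ) : Prop :=
  ∀ v : V, ∀ S : Finset V, (∀ x ∈ S, G.Adj v x) → IsIndep G S → S.card ≤ d - 1

/-- `X` is a local improvement of `w²(A)`. -/
def LocalImprovement (G : SimpleGraph V) (d : ℕ) (w : V → ℝ) (A X : Finset V) : Prop :=
  IsIndep G X ∧ X.card ≤ (d - 1) ^ 2 + (d - 1) ∧ wsq w (nbhd G X A) < wsq w X

/-- No claw improves `w²(A)`: `w²(T) ≤ w²(N(T,A))` for every independent set `T` that is a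
singleton or whose vertices are all adjacent to a common vertex. -/
def NoClawImproves (G : SimpleGraph V) (w : V → ℝ) (A : Finset V) : Prop :=
  ∀ T : Finset V, IsIndep G T → (T.card = 1 ∨ ∃ v : V, ∀ x ∈ T, G.Adj v x) →
    wsq w T ≤ wsq w (nbhd G T A)

/-- The charge map, relative to a choice `n` of heaviest neighbors. -/
def charge (G : SimpleGraph V) (w : V → ℝ) (A : Finset V) (n : V → V) (u v : V) : ℝ :=
  if v = n u then w u - wsum w (nbhd1 G u A) / 2 else 0

/-- `u ∈ T_v` is single (with `√ε = 1/2304`). -/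
def IsSingle (G : SimpleGraph V) (w : V → ℝ) (A : Finset V) (u v : V) : Prop :=
  (1 - 1 / 2304 : ℝ) ≤ w u / w v ∧ w u / w v ≤ 1 + 1 / 2304 ∧
  wsum w (nbhd1 G u A) ≤ (1 + 1 / 2304) * w v

/-- `u ∈ T_v` is double (with `√ε = 1/2304`). -/
def IsDouble (G : SimpleGraph V) (w : V → ℝ) (A : Finset V) (u v : V) : Prop :=
  2 ≤ (nbhd1 G u A).card ∧
  ∃ v₂ ∈ (nbhd1 G u A).erase v, (∀ x ∈ (nbhd1 G u A).erase v, w x ≤ w v₂) ∧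
    (1 - 1 / 2304 : ℝ) ≤ w u / w v ∧ w u / w v ≤ 1 + 1 / 2304 ∧
    (1 - 1 / 2304 : ℝ) ≤ w v₂ / w v ∧ w v₂ / w v ≤ 1 ∧
    (2 - 1 / 2304) * w v ≤ wsum w (nbhd1 G u A) ∧ wsum w (nbhd1 G u A) < 2 * w u

/-- The contribution map. -/
def contr (G : SimpleGraph V) (w : V → ℝ) (A : Finset V) (u v : V) : ℝ :=
  if v ∈ nbhd1 G u A then max 0 (((w u) ^ 2 - wsq w ((nbhd1 G u A).erase v)) / w v) else 0

lemma mem_nbhd1 {G : SimpleGraph V} {u : V} {W : Finset V} {x : V} :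
    x ∈ nbhd1 G u W ↔ x ∈ W ∧ (x = u ∨ G.Adj u x) := by
  simp [nbhd1, nbhd]

lemma nbhd1_mono {G : SimpleGraph V} {u : V} {W W' : Finset V} (h : W ⊆ W') :
    nbhd1 G u W ⊆ nbhd1 G u W' := by
  intro x hx
  rw [mem_nbhd1] at hx ⊢
  exact ⟨h hx.1, hx.2⟩

lemma wsum_nonneg {w : V → ℝ} (hw : ∀ x, 0 < w x) (U : Finset V) : 0 ≤ wsum w U :=
  Finset.sum_nonneg fun x _ => (hw x).le

lemma wsq_nonneg (w : V → ℝ) (U : Finset V) : 0 ≤ wsq w U :=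
  Finset.sum_nonneg fun x _ => sq_nonneg _

lemma wsum_mono {w : V → ℝ} (hw : ∀ x, 0 < w x) {U U' : Finset V} (h : U ⊆ U') :
    wsum w U ≤ wsum w U' :=
  Finset.sum_le_sum_of_subset_of_nonneg h fun x _ _ => (hw x).le

lemma wsq_mono {w : V → ℝ} {U U' : Finset V} (h : U ⊆ U') :
    wsq w U ≤ wsq w U' :=
  Finset.sum_le_sum_of_subset_of_nonneg h fun x _ _ => sq_nonneg _

lemma le_wsum {w : V → ℝ} (hw : ∀ x, 0 < w x) {x : V} {U : Finset V} (hx : x ∈ U) :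
    w x ≤ wsum w U :=
  Finset.single_le_sum (fun y _ => (hw y).le) hx

lemma wsq_le_mul_wsum {w : V → ℝ} (hw : ∀ x, 0 < w x) {U : Finset V} {M : ℝ}
    (hM : ∀ x ∈ U, w x ≤ M) : wsq w U ≤ M * wsum w U := by
  rw [wsq, wsum, Finset.mul_sum]
  exact Finset.sum_le_sum fun x hx => by nlinarith [hw x, hM x hx]

lemma wsq_union_le (w : V → ℝ) (U U' : Finset V) :
    wsq w (U ∪ U') ≤ wsq w U + wsq w U' := by
  have h := Finset.sum_union_inter (s₁ := U) (s₂ := U') (f := fun x => w x ^ 2)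
  have h2 := wsq_nonneg w (U ∩ U')
  simp only [wsq] at *
  linarith

lemma wsq_biUnion_le {ι : Type*} (w : V → ℝ) (s : Finset ι) (f : ι → Finset V) :
    wsq w (s.biUnion f) ≤ ∑ i ∈ s, wsq w (f i) := by
  classical
  induction s using Finset.induction_on with
  | empty => simp [wsq]
  | insert _ _ h ih =>
    rename_i a s'
    rw [Finset.biUnion_insert, Finset.sum_insert h]
    exact le_trans (wsq_union_le w _ _) (by linarith)

set_option maxHeartbeats 1000000 in
theorem stmt19 [Fintype V] (G : SimpleGraph V) (d : ℕ) (hd : 3 ≤ d) (hG : ClawFree G d)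
    (w : V → ℝ) (hw : ∀ v, 0 < w v) (Astar A : Finset V)
    (hAstarIndep : IsIndep G Astar)
    (hAstarMax : ∀ S : Finset V, IsIndep G S → wsum w S ≤ wsum w Astar)
    (hAIndep : IsIndep G A) (hAmax : ∀ v : V, (nbhd1 G v A).Nonempty)
    (hNoImp : ∀ X : Finset V, ¬ LocalImprovement G d w A X)
    (n : V → V)
    (hn : ∀ u ∈ Astar, n u ∈ nbhd1 G u A ∧ ∀ x ∈ nbhd1 G u A, w x ≤ w (n u))
    (B : Finset V) (hBsub : B ⊆ A) (t : V → V)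
    (ht : ∀ v ∈ B, t v ∈ Astar ∧ 0 < charge G w A n (t v) v ∧ IsSingle G w A (t v) v
        ∧ ∀ u ∈ Astar, 0 < charge G w A n u v → IsSingle G w A u v → u = t v)
    (htInj : ∀ v₁ ∈ B, ∀ v₂ ∈ B, t v₁ = t v₂ → v₁ = v₂)
    (n' : V → V)
    (hn' : ∀ u ∈ Astar \ (B.image t
            ∪ Astar.filter (fun x => 3 * w x ≤ wsum w (nbhd1 G x A))),
        n' u ∈ nbhd1 G u (A \ B) ∧ ∀ x ∈ nbhd1 G u (A \ B), w x ≤ w (n' u)) :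
    ∀ v ∈ A \ B,
      ∑ u ∈ (Astar \ (B.image t
            ∪ Astar.filter (fun x => 3 * w x ≤ wsum w (nbhd1 G x A)))).filter
          (fun u => 0 < charge G w (A \ B) n' u v), charge G w (A \ B) n' u v
        ≤ ((d : ℝ) + 2) / 4 * w v := by
  intro v hv
  obtain ⟨hvA, hvB⟩ := Finset.mem_sdiff.mp hv
  have hW : 0 < w v := hw v
  set A' : Finset V := A \ B with hA'def
  set As : Finset V := Astar \ (B.image t
      ∪ Astar.filter (fun x => 3 * w x ≤ wsum w (nbhd1 G x A))) with hAsdef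
  set T : Finset V := As.filter (fun u => 0 < charge G w A' n' u v) with hTdef
  -- basic membership facts
  have hTmem : ∀ u ∈ T, u ∈ Astar ∧ u ∉ B.image t ∧
      wsum w (nbhd1 G u A) < 3 * w u ∧ 0 < charge G w A' n' u v := by
    intro u hu
    have h1 := Finset.mem_filter.mp hu
    have h2 := Finset.mem_sdiff.mp h1.1
    have h3 := h2.2
    simp only [Finset.mem_union, not_or] at h3
    refine ⟨h2.1, h3.1, ?_, h1.2⟩
    have := h3.2
    rw [Finset.mem_filter, not_and] at this
    exact lt_of_not_ge (this h2.1)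
  have hTAs : ∀ u ∈ T, u ∈ As := fun u hu => (Finset.mem_filter.mp hu).1
  -- per-u neighborhood facts
  have hfacts : ∀ u ∈ T, v ∈ nbhd1 G u A' ∧ (∀ x ∈ nbhd1 G u A', w x ≤ w v) ∧
      wsum w (nbhd1 G u A') < 2 * w u ∧
      charge G w A' n' u v = w u - wsum w (nbhd1 G u A') / 2 := by
    intro u hu
    obtain ⟨hn'1, hn'2⟩ := hn' u (hTAs u hu)
    have hpos := (hTmem u hu).2.2.2
    have hveq : v = n' u := by
      by_contra hne
      rw [charge, if_neg hne] at hpos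
      exact lt_irrefl 0 hpos
    have hch : charge G w A' n' u v = w u - wsum w (nbhd1 G u A') / 2 := by
      rw [charge, if_pos hveq]
    rw [hch] at hpos
    exact ⟨hveq ▸ hn'1, fun x hx => hveq ▸ hn'2 x hx, by linarith, hch⟩
  -- per-u key algebraic inequalities
  have hq1 : ∀ u ∈ T, 2 * w v * (charge G w A' n' u v)
      ≤ w u ^ 2 - wsq w ((nbhd1 G u A').erase v) := by
    intro u hu
    obtain ⟨hvNu, hmax, hsu, hch⟩ := hfacts u hu
    have hE1 : wsq w ((nbhd1 G u A').erase v) ≤ w v * wsum w ((nbhd1 G u A').erase v) :=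
      wsq_le_mul_wsum hw (fun x hx => hmax x (Finset.erase_subset _ _ hx))
    have hE2 : wsum w ((nbhd1 G u A').erase v) + w v = wsum w (nbhd1 G u A') :=
      Finset.sum_erase_add _ _ hvNu
    rw [hch]
    nlinarith [sq_nonneg (w u - w v)]
  have hq2 : ∀ u ∈ T, (w u - w v) ^ 2 ≤ w u ^ 2 - wsq w ((nbhd1 G u A').erase v) := by
    intro u hu
    obtain ⟨hvNu, hmax, hsu, hch⟩ := hfacts u hu
    have hE1 : wsq w ((nbhd1 G u A').erase v) ≤ w v * wsum w ((nbhd1 G u A').erase v) :=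
      wsq_le_mul_wsum hw (fun x hx => hmax x (Finset.erase_subset _ _ hx))
    have hE2 : wsum w ((nbhd1 G u A').erase v) + w v = wsum w (nbhd1 G u A') :=
      Finset.sum_erase_add _ _ hvNu
    nlinarith [hW]
  -- if u ∈ A then nbhd1 G u A = {u}
  have hAone : ∀ u ∈ A, nbhd1 G u A = {u} := by
    intro u huA
    ext x
    rw [mem_nbhd1, Finset.mem_singleton]
    constructor
    · rintro ⟨hxA, hx | hx⟩
      · exact hx
      · exact absurd hx (hAIndep u huA x hxA (G.ne_of_adj hx))
    · rintro rfl
      exact ⟨huA, Or.inl rfl⟩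
  have hTA : ∀ u ∈ T, u ∈ A → u = v := by
    intro u hu huA
    have h1 := (hfacts u hu).1
    have h2 : v ∈ nbhd1 G u A := nbhd1_mono (Finset.sdiff_subset) h1
    rw [hAone u huA, Finset.mem_singleton] at h2
    exact h2.symm
  have hadj : ∀ u ∈ T, u ≠ v → G.Adj v u := by
    intro u hu hne
    have h1 := (hfacts u hu).1
    rw [mem_nbhd1] at h1
    rcases h1.2 with h | h
    · exact absurd h.symm hne
    · exact h.symm
  have hTsub : T ⊆ Astar := fun u hu => (hTmem u hu).1
  have hTcard : T.card ≤ d := by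
    have h1 : (T.erase v).card ≤ d - 1 := by
      refine hG v (T.erase v) ?_ ?_
      · intro x hx
        exact hadj x (Finset.mem_of_mem_erase hx) (Finset.ne_of_mem_erase hx)
      · intro a ha b hb hab
        exact hAstarIndep a (hTsub (Finset.mem_of_mem_erase ha))
          b (hTsub (Finset.mem_of_mem_erase hb)) hab
    by_cases hvT : v ∈ T
    · have h2 : (T.erase v).card = T.card - 1 := Finset.card_erase_of_mem hvT
      have h3 : 1 ≤ T.card := Finset.card_pos.mpr ⟨v, hvT⟩
      omega
    · rw [Finset.erase_eq_of_notMem hvT] at h1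
      omega
  -- B-neighbors
  set D : Finset V := T.biUnion (fun u => (nbhd1 G u A) ∩ B) with hDdef
  have hDB : D ⊆ B := by
    intro x hx
    obtain ⟨u, hu, hx⟩ := Finset.mem_biUnion.mp hx
    exact (Finset.mem_inter.mp hx).2
  have hDcard_each : ∀ u ∈ T, ((nbhd1 G u A) ∩ B).card ≤ d - 2 := by
    intro u hu
    by_cases huv : u = v
    · subst huv
      have : (nbhd1 G u A) ∩ B = ∅ := by
        rw [hAone u hvA]
        rw [Finset.singleton_inter_of_notMem hvB]
      rw [this]
      simp
    · have huA : u ∉ A := fun h => huv (hTA u hu h)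
      have hadjall : ∀ x ∈ nbhd1 G u A, G.Adj u x := by
        intro x hx
        rw [mem_nbhd1] at hx
        rcases hx.2 with h | h
        · exact absurd (h ▸ hx.1) huA
        · exact h
      have hcard : (nbhd1 G u A).card ≤ d - 1 := by
        refine hG u _ hadjall ?_
        intro a ha b hb hab
        exact hAIndep a (mem_nbhd1.mp ha).1 b (mem_nbhd1.mp hb).1 hab
      have hvmem : v ∈ nbhd1 G u A := nbhd1_mono (Finset.sdiff_subset) (hfacts u hu).1
      have hsub : (nbhd1 G u A) ∩ B ⊆ (nbhd1 G u A).erase v := by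
        intro x hx
        obtain ⟨hx1, hx2⟩ := Finset.mem_inter.mp hx
        exact Finset.mem_erase.mpr ⟨fun he => hvB (he ▸ hx2), hx1⟩
      have h4 := Finset.card_le_card hsub
      rw [Finset.card_erase_of_mem hvmem] at h4
      omega
  have hDcard : D.card ≤ d * (d - 2) := by
    refine le_trans (Finset.card_biUnion_le) ?_
    calc ∑ u ∈ T, ((nbhd1 G u A) ∩ B).card ≤ ∑ _u ∈ T, (d - 2) :=
          Finset.sum_le_sum hDcard_each
      _ = T.card * (d - 2) := by rw [Finset.sum_const, smul_eq_mul]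
      _ ≤ d * (d - 2) := Nat.mul_le_mul_right _ hTcard
  -- partner facts
  have hpart : ∀ x ∈ D, x ∈ nbhd1 G (t x) A ∧ (∀ y ∈ nbhd1 G (t x) A, w y ≤ w x) ∧
      (1 - 1 / 2304 : ℝ) * w x ≤ w (t x) ∧
      wsum w (nbhd1 G (t x) A) ≤ (1 + 1 / 2304) * w x ∧ t x ∈ Astar := by
    intro x hx
    have hxB := hDB hx
    obtain ⟨ht1, ht2, ht3, _⟩ := ht x hxB
    have hxn : x = n (t x) := by
      by_contra h
      rw [charge, if_neg h] at ht2
      exact lt_irrefl 0 ht2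
    obtain ⟨hn1, hn2⟩ := hn (t x) ht1
    have hxn' : n (t x) = x := hxn.symm
    rw [hxn'] at hn1 hn2
    exact ⟨hn1, hn2, (le_div_iff₀ (hw x)).mp ht3.1, ht3.2.2, ht1⟩
  have hpartwsq : ∀ x ∈ D,
      wsq w (nbhd1 G (t x) A) ≤ w (t x) ^ 2 + 3 * (1 / 2304) * (w x) ^ 2 := by
    intro x hx
    obtain ⟨h1, h2, h3, h4, _⟩ := hpart x hx
    have hE : wsq w ((nbhd1 G (t x) A).erase x)
        ≤ w x * wsum w ((nbhd1 G (t x) A).erase x) :=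
      wsq_le_mul_wsum hw (fun y hy => h2 y (Finset.erase_subset _ _ hy))
    have hsum : wsum w ((nbhd1 G (t x) A).erase x) + w x = wsum w (nbhd1 G (t x) A) :=
      Finset.sum_erase_add _ _ h1
    have hwsqe : wsq w ((nbhd1 G (t x) A).erase x) + w x ^ 2 = wsq w (nbhd1 G (t x) A) :=
      Finset.sum_erase_add _ _ h1
    have h5 : ((1 - 1 / 2304 : ℝ) * w x) ^ 2 ≤ w (t x) ^ 2 := by
      have : (0:ℝ) ≤ (1 - 1 / 2304 : ℝ) * w x := by nlinarith [hw x]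
      nlinarith [h3]
    nlinarith [hw x, hE, hsum, hwsqe, h5]
  -- the improvement set
  set X : Finset V := T ∪ D.image t with hXdef
  have hXsub : X ⊆ Astar := by
    refine Finset.union_subset hTsub ?_
    intro y hy
    obtain ⟨x, hxD, rfl⟩ := Finset.mem_image.mp hy
    exact (hpart x hxD).2.2.2.2
  have hXindep : IsIndep G X := fun a ha b hb hab =>
    hAstarIndep a (hXsub ha) b (hXsub hb) hab
  have hXcard : X.card ≤ (d - 1) ^ 2 + (d - 1) := by
    have h1 : X.card ≤ T.card + (D.image t).card := Finset.card_union_le _ _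
    have h2 : (D.image t).card ≤ D.card := Finset.card_image_le
    have h3 : X.card ≤ d + d * (d - 2) := by
      have := le_trans h2 hDcard
      omega
    obtain ⟨m, rfl⟩ := Nat.exists_eq_add_of_le hd
    have e1 : 3 + m - 1 = m + 2 := by omega
    have e2 : 3 + m - 2 = m + 1 := by omega
    rw [e1] at *
    rw [e2] at h3
    have e3 : (3 + m) + (3 + m) * (m + 1) = (m + 2) ^ 2 + (m + 2) := by ring
    omega
  have hImp : wsq w X ≤ wsq w (nbhd G X A) := by
    by_contra hlt
    push_neg at hlt
    exact hNoImp X ⟨hXindep, hXcard, hlt⟩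
  -- decomposition of wsq X
  have hdisj : Disjoint T (D.image t) := by
    rw [Finset.disjoint_left]
    intro a haT haI
    exact (hTmem a haT).2.1 (Finset.image_subset_image hDB haI)
  have hXsum : wsq w X = (∑ u ∈ T, w u ^ 2) + ∑ x ∈ D, w (t x) ^ 2 := by
    rw [hXdef]
    rw [wsq, Finset.sum_union hdisj, Finset.sum_image
      (fun x hx y hy hxy => htInj x (hDB hx) y (hDB hy) hxy)]
  -- the cover of the neighborhood of X
  set C : Finset V := insert v ((T.biUnion fun u => (nbhd1 G u A').erase v)
      ∪ (D.biUnion fun x => nbhd1 G (t x) A)) with hCdef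
  have hcover : nbhd G X A ⊆ C := by
    intro y hy
    rw [nbhd, Finset.mem_filter] at hy
    obtain ⟨hyA, hcase⟩ := hy
    have hstep : ∀ z ∈ T, (y = z ∨ G.Adj z y) → y ∈ C := by
      intro z hz hyz
      by_cases hyB : y ∈ B
      · have hyD : y ∈ D := Finset.mem_biUnion.mpr
          ⟨z, hz, Finset.mem_inter.mpr ⟨mem_nbhd1.mpr ⟨hyA, hyz⟩, hyB⟩⟩
        exact Finset.mem_insert_of_mem (Finset.mem_union_right _
          (Finset.mem_biUnion.mpr ⟨y, hyD, (hpart y hyD).1⟩))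
      · have hyA' : y ∈ nbhd1 G z A' :=
          mem_nbhd1.mpr ⟨Finset.mem_sdiff.mpr ⟨hyA, hyB⟩, hyz⟩
        by_cases hyv : y = v
        · exact hyv ▸ Finset.mem_insert_self _ _
        · exact Finset.mem_insert_of_mem (Finset.mem_union_left _
            (Finset.mem_biUnion.mpr ⟨z, hz, Finset.mem_erase.mpr ⟨hyv, hyA'⟩⟩))
    rcases hcase with hyX | ⟨z, hzX, hzadj⟩
    · rcases Finset.mem_union.mp hyX with hyT | hyI
      · exact hstep y hyT (Or.inl rfl)
      · obtain ⟨x, hxD, rfl⟩ := Finset.mem_image.mp hyI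
        exact Finset.mem_insert_of_mem (Finset.mem_union_right _
          (Finset.mem_biUnion.mpr ⟨x, hxD, mem_nbhd1.mpr ⟨hyA, Or.inl rfl⟩⟩))
    · rcases Finset.mem_union.mp hzX with hzT | hzI
      · exact hstep z hzT (Or.inr hzadj)
      · obtain ⟨x, hxD, rfl⟩ := Finset.mem_image.mp hzI
        exact Finset.mem_insert_of_mem (Finset.mem_union_right _
          (Finset.mem_biUnion.mpr ⟨x, hxD, mem_nbhd1.mpr ⟨hyA, Or.inr hzadj⟩⟩))
  have hCbound : wsq w (nbhd G X A) ≤ w v ^ 2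
      + (∑ u ∈ T, wsq w ((nbhd1 G u A').erase v))
      + ∑ x ∈ D, wsq w (nbhd1 G (t x) A) := by
    refine le_trans (wsq_mono hcover) ?_
    rw [hCdef, Finset.insert_eq]
    refine le_trans (wsq_union_le w _ _) ?_
    have h1 : wsq w ({v} : Finset V) = w v ^ 2 := by
      rw [wsq, Finset.sum_singleton]
    rw [h1]
    have h2 := wsq_union_le w (T.biUnion fun u => (nbhd1 G u A').erase v)
      (D.biUnion fun x => nbhd1 G (t x) A)
    have h3 := wsq_biUnion_le w T (fun u => (nbhd1 G u A').erase v)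
    have h4 := wsq_biUnion_le w D (fun x => nbhd1 G (t x) A)
    linarith
  -- main inequality
  have hQmain : (∑ u ∈ T, (w u ^ 2 - wsq w ((nbhd1 G u A').erase v)))
      ≤ w v ^ 2 + 3 * (1 / 2304) * wsq w D := by
    have h1 := le_trans hImp hCbound
    rw [hXsum] at h1
    have h2 : ∑ x ∈ D, wsq w (nbhd1 G (t x) A)
        ≤ ∑ x ∈ D, (w (t x) ^ 2 + 3 * (1 / 2304) * (w x) ^ 2) :=
      Finset.sum_le_sum hpartwsq
    have h3 : ∑ x ∈ D, (w (t x) ^ 2 + 3 * (1 / 2304) * (w x) ^ 2)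
        = (∑ x ∈ D, w (t x) ^ 2) + 3 * (1 / 2304) * ∑ x ∈ D, (w x) ^ 2 := by
      rw [Finset.sum_add_distrib, Finset.mul_sum]
    have h4 : (∑ u ∈ T, (w u ^ 2 - wsq w ((nbhd1 G u A').erase v)))
        = (∑ u ∈ T, w u ^ 2) - ∑ u ∈ T, wsq w ((nbhd1 G u A').erase v) :=
      Finset.sum_sub_distrib _ _
    have h5 : wsq w D = ∑ x ∈ D, (w x) ^ 2 := rfl
    linarith
  have hwsqD : wsq w D ≤ 9 * ∑ u ∈ T, w u ^ 2 := by
    refine le_trans (wsq_biUnion_le w T _) ?_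
    rw [Finset.mul_sum]
    refine Finset.sum_le_sum ?_
    intro u hu
    have hlt := (hTmem u hu).2.2.1
    have hsub : (nbhd1 G u A) ∩ B ⊆ nbhd1 G u A := Finset.inter_subset_left
    have hmax : ∀ x ∈ (nbhd1 G u A) ∩ B, w x ≤ 3 * w u :=
      fun x hx => le_trans (le_wsum hw (hsub hx)) hlt.le
    have h1 : wsq w ((nbhd1 G u A) ∩ B) ≤ (3 * w u) * wsum w ((nbhd1 G u A) ∩ B) :=
      wsq_le_mul_wsum hw hmax
    have h2 : wsum w ((nbhd1 G u A) ∩ B) ≤ wsum w (nbhd1 G u A) := wsum_mono hw hsub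
    have h3 := wsum_nonneg hw ((nbhd1 G u A) ∩ B)
    nlinarith [hw u]
  -- final arithmetic
  set Q : ℝ := ∑ u ∈ T, (w u ^ 2 - wsq w ((nbhd1 G u A').erase v)) with hQdef
  set S : ℝ := ∑ u ∈ T, w u ^ 2 with hSdef
  have hch : 2 * w v * (∑ u ∈ T, charge G w A' n' u v) ≤ Q := by
    rw [hQdef, Finset.mul_sum]
    exact Finset.sum_le_sum hq1
  have hQ2 : ∑ u ∈ T, (w u - w v) ^ 2 ≤ Q := Finset.sum_le_sum hq2
  have hQ0 : 0 ≤ Q := le_trans (Finset.sum_nonneg fun u _ => sq_nonneg _) hQ2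
  have hS : S ≤ 2 * Q + 2 * (T.card : ℝ) * w v ^ 2 := by
    have h1 : ∀ u ∈ T, w u ^ 2 ≤ 2 * (w u - w v) ^ 2 + 2 * w v ^ 2 :=
      fun u _ => by nlinarith [sq_nonneg (w u - 2 * w v)]
    calc S ≤ ∑ u ∈ T, (2 * (w u - w v) ^ 2 + 2 * w v ^ 2) := Finset.sum_le_sum h1
      _ = 2 * (∑ u ∈ T, (w u - w v) ^ 2) + (T.card : ℝ) * (2 * w v ^ 2) := by
          rw [Finset.sum_add_distrib, Finset.mul_sum, Finset.sum_const, nsmul_eq_mul]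
      _ ≤ 2 * Q + 2 * (T.card : ℝ) * w v ^ 2 := by linarith
  have hk : (T.card : ℝ) ≤ (d : ℝ) := Nat.cast_le.mpr hTcard
  have hd3 : (3 : ℝ) ≤ (d : ℝ) := by exact_mod_cast hd
  have hQfin : Q ≤ w v ^ 2 + (27 / 2304) * S := by linarith only [hwsqD, hQmain]
  have hlast : 2 * w v * (∑ u ∈ T, charge G w A' n' u v)
      ≤ ((d : ℝ) + 2) / 2 * w v ^ 2 := by
    nlinarith only [hch, hQfin, hS, hQ0,
      mul_le_mul_of_nonneg_right hk (sq_nonneg (w v)),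
      mul_le_mul_of_nonneg_right hd3 (sq_nonneg (w v)), sq_nonneg (w v)]
  nlinarith only [hlast, hW, mul_pos hW hW]


end
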